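/- Let Φ, Ψ be clause sets, θ₁ = θ₁' ∨ p and θ₂ = θ₂' ∨ ¬p be clauses with resolvent θ = θ₁' ∨ θ₂', and suppose p ∈ sig(Φ) ∩ sig(Ψ). If χ₁ is an intermediate separator of Φ and Ψ relative to θ₁ and χ₂ is an intermediate separator relative to θ₂, then (p ∨ χ₁) ∧ (¬p ∨ χ₂) is an intermediate separator of Φ and Ψ relative to θ. -/
import Mathlib

inductive PropForm : Type where
  | var : ℕ → PropForm
  | tru : PropForm
  | fls : PropForm
  | neg : PropForm → PropForm
  | conj : PropForm → PropForm → PropForm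
  | disj : PropForm → PropForm → PropForm
deriving DecidableEq

namespace PropForm

def eval (v : ℕ → Bool) : PropForm → Bool
  | var p => v p
  | tru => true
  | fls => false
  | neg φ => !(eval v φ)
  | conj φ ψ => eval v φ && eval v ψ
  | disj φ ψ => eval v φ || eval v ψ

def sig : PropForm → Finset ℕ
  | var p => {p}
  | tru => ∅
  | fls => ∅
  | neg φ => sig φ
  | conj φ ψ => sig φ ∪ sig ψ
  | disj φ ψ => sig φ ∪ sig ψ

def impl (φ ψ : PropForm) : PropForm := disj (neg φ) ψ

def iff (φ ψ : PropForm) : PropForm := conj (impl φ ψ) (impl ψ φ)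

end PropForm

/-- Semantic entailment: every model of `φ` is a model of `ψ`. -/
def Entails (φ ψ : PropForm) : Prop :=
  ∀ v : ℕ → Bool, φ.eval v = true → ψ.eval v = true

/-- `χ` is an intermediate separator of `Φ` and `Ψ` relative to the clause `θ`. -/
def IsIntermediateSep (Φ Ψ θ χ : PropForm) : Prop :=
  χ.sig ⊆ Φ.sig ∩ Ψ.sig ∧ Entails Φ (θ.disj χ) ∧ Entails Ψ (θ.disj χ.neg)

/-- Resolution upon a shared atom `p ∈ sig(Φ) ∩ sig(Ψ)`: the formula
`(p ∨ χ₁) ∧ (¬p ∨ χ₂)` is an intermediate separator for the resolvent. -/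
theorem intermediate_sep_resolution_shared (Φ Ψ θ₁' θ₂' χ₁ χ₂ : PropForm) (p : ℕ)
    (hpΦ : p ∈ Φ.sig) (hpΨ : p ∈ Ψ.sig)
    (h₁ : IsIntermediateSep Φ Ψ (θ₁'.disj (PropForm.var p)) χ₁)
    (h₂ : IsIntermediateSep Φ Ψ (θ₂'.disj (PropForm.var p).neg) χ₂) :
    IsIntermediateSep Φ Ψ (θ₁'.disj θ₂')
      (((PropForm.var p).disj χ₁).conj ((PropForm.var p).neg.disj χ₂)) := by
  obtain ⟨hs₁, hΦ₁, hΨ₁⟩ := h₁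
  obtain ⟨hs₂, hΦ₂, hΨ₂⟩ := h₂
  refine ⟨?_, ?_, ?_⟩
  · simp only [PropForm.sig]
    intro x hx
    simp only [Finset.mem_union, Finset.mem_singleton] at hx
    rcases hx with (h | h) | (h | h)
    · subst h; exact Finset.mem_inter.mpr ⟨hpΦ, hpΨ⟩
    · exact hs₁ h
    · subst h; exact Finset.mem_inter.mpr ⟨hpΦ, hpΨ⟩
    · exact hs₂ h
  · intro v hv
    have e1 := hΦ₁ v hv
    have e2 := hΦ₂ v hv
    simp only [PropForm.eval] at e1 e2 ⊢
    cases h : v p <;> simp [h] at e1 e2 ⊢ <;> tauto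
  · intro v hv
    have e1 := hΨ₁ v hv
    have e2 := hΨ₂ v hv
    simp only [PropForm.eval] at e1 e2 ⊢
    cases h : v p <;> simp [h] at e1 e2 ⊢ <;> tauto
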